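/- Let A be an m×q dual complex matrix and B a q×n dual complex matrix, let N_A be an NDMPI of A and N_B an NDMPI of B, and set A_e = A·N_A·A and B_e = B·N_B·B. If N_A·A·B·B*·A* = B·B*·(A_e)* and B·N_B·A*·A·B = A*·A·B_e, then N_A·A·B·B* = B·B*·N_A·A. -/

import Mathlib

open Matrix

/-- The dual complex numbers ℂ[ε] with ε² = 0 (dual numbers over ℂ). -/
abbrev DualComplex := DualNumber ℂ

/-- Conjugation on dual complex numbers: star (a + b·ε) = (conj a) + (conj b)·ε. -/
noncomputable instance : StarRing DualComplex where
  star x := ⟨star x.fst, star x.snd⟩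
  star_involutive x := TrivSqZeroExt.ext (star_star x.fst) (star_star x.snd)
  star_mul x y := TrivSqZeroExt.ext
    (by simp [TrivSqZeroExt.fst_mul, mul_comm]; exact mul_comm _ _)
    (by simp [TrivSqZeroExt.snd_mul]; erw [TrivSqZeroExt.snd_mul]; simp [TrivSqZeroExt.fst_mk, TrivSqZeroExt.snd_mk]; ring)
  star_add x y := TrivSqZeroExt.ext (by simp; rfl) (by simp; rfl)

/-- `X` is a new dual Moore–Penrose inverse (NDMPI) of `M`:
`M*·M·X·M·M* = M*·M·M*`, `X·M·X = X`, `(M·X)* = M·X`, `(X·M)* = X·M`. -/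
def IsNDMPI {m n : ℕ} (M : Matrix (Fin m) (Fin n) DualComplex)
    (X : Matrix (Fin n) (Fin m) DualComplex) : Prop :=
  Mᴴ * M * X * M * Mᴴ = Mᴴ * M * Mᴴ ∧
  X * M * X = X ∧
  (M * X)ᴴ = M * X ∧
  (X * M)ᴴ = X * M

/-- If `N_A·A·B·B*·A* = B·B*·(A_e)*` and `B·N_B·A*·A·B = A*·A·B_e`,
then `N_A·A·B·B* = B·B*·N_A·A`. -/
theorem stmt_3 {m q n : ℕ} (A : Matrix (Fin m) (Fin q) DualComplex)
    (B : Matrix (Fin q) (Fin n) DualComplex)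
    (NA : Matrix (Fin q) (Fin m) DualComplex) (hNA : IsNDMPI A NA)
    (NB : Matrix (Fin n) (Fin q) DualComplex) (hNB : IsNDMPI B NB)
    (h1 : NA * A * B * Bᴴ * Aᴴ = B * Bᴴ * (A * NA * A)ᴴ)
    (h2 : B * NB * Aᴴ * A * B = Aᴴ * A * (B * NB * B)) :
    NA * A * B * Bᴴ = B * Bᴴ * (NA * A) := by
  obtain ⟨hdef, hX, hMX, hXM⟩ := hNA
  have hAN : Aᴴ * NAᴴ = NA * A := by
    simpa [Matrix.conjTranspose_mul] using hXM
  -- conj transpose of h1, right-associated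
  have e1 : A * (B * (Bᴴ * (NA * A))) = A * (NA * (A * (B * Bᴴ))) := by
    have h := congrArg Matrix.conjTranspose h1
    simp only [Matrix.conjTranspose_mul, Matrix.conjTranspose_conjTranspose,
      Matrix.mul_assoc] at h
    rw [hAN] at h
    simpa [Matrix.mul_assoc] using h
  have hX' : ∀ X : Matrix (Fin m) (Fin q) DualComplex,
      NA * (A * (NA * X)) = NA * X := by
    intro X
    simp only [← Matrix.mul_assoc]
    rw [hX]
  have e2 : (NA * A) * (B * (Bᴴ * (NA * A))) = (NA * A) * (B * Bᴴ) := by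
    have h := congrArg (fun X => NA * X) e1
    rw [hX' (A * (B * Bᴴ))] at h
    simpa [Matrix.mul_assoc] using h
  have key : ∀ P : Matrix (Fin q) (Fin q) DualComplex, Pᴴ = P →
      P * (B * (Bᴴ * P)) = P * (B * Bᴴ) → P * (B * Bᴴ) = B * (Bᴴ * P) := by
    intro P hP he
    have h := congrArg Matrix.conjTranspose he
    simp only [Matrix.conjTranspose_mul, Matrix.conjTranspose_conjTranspose, hP,
      Matrix.mul_assoc] at h
    rw [he] at h
    exact h
  have := key (NA * A) hXM e2
  simpa [Matrix.mul_assoc] using this
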